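/- Let z be a random vector in ℝ^d with 0 < E‖z‖₂² < ∞, let z_1, z_2, … be iid copies of z, and for each n set Z_n := [z_1,…,z_n] ∈ ℝ^{d×n} and M := E[z zᵀ]. Then almost surely the stable rank st(Z_n) converges, as n → ∞, to the effective rank er(M) = tr(M)/‖M‖_op. -/

import Mathlib

open MeasureTheory ProbabilityTheory

noncomputable section

/-- Squared Frobenius norm of a real matrix. -/
def frobSq {m n : Type*} [Fintype m] [Fintype n] (A : Matrix m n ℝ) : ℝ :=
  ∑ i, ∑ j, (A i j) ^ 2

/-- Spectral (largest-singular-value) norm of a real matrix. -/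
def opNorm {m n : Type*} [Fintype m] [Fintype n] [DecidableEq n] (A : Matrix m n ℝ) : ℝ :=
  ‖LinearMap.toContinuousLinearMap (Matrix.toEuclideanLin A)‖

/-- Stable rank `st(A) = ‖A‖_F² / ‖A‖_op²`. -/
def stRank {m n : Type*} [Fintype m] [Fintype n] [DecidableEq n] (A : Matrix m n ℝ) : ℝ :=
  frobSq A / (opNorm A) ^ 2

open Matrix

lemma opNorm_mul_transpose {d n : ℕ} (A : Matrix (Fin d) (Fin n) ℝ) :
    opNorm (A * Aᵀ) = opNorm A ^ 2 := by
  set T := LinearMap.toContinuousLinearMap (Matrix.toEuclideanLin A) with hTdef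
  have h2 : Matrix.toEuclideanLin Aᵀ = LinearMap.adjoint (Matrix.toEuclideanLin A) := by
    rw [← Matrix.toEuclideanLin_conjTranspose_eq_adjoint]
    congr 1
  have h1 : Matrix.toEuclideanLin (A * Aᵀ)
      = (Matrix.toEuclideanLin A).comp (Matrix.toEuclideanLin Aᵀ) := by
    rw [Matrix.toEuclideanLin_eq_toLin]
    exact Matrix.toLin_mul (PiLp.basisFun 2 ℝ (Fin d)) (PiLp.basisFun 2 ℝ (Fin n))
      (PiLp.basisFun 2 ℝ (Fin d)) A Aᵀ
  have hT : LinearMap.toContinuousLinearMap (Matrix.toEuclideanLin (A * Aᵀ))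
      = T ∘L ContinuousLinearMap.adjoint T := by
    ext x
    simp [h1, h2, hTdef, ← LinearMap.adjoint_toContinuousLinearMap]
  have hkey := ContinuousLinearMap.norm_adjoint_comp_self (ContinuousLinearMap.adjoint T)
  rw [ContinuousLinearMap.adjoint_adjoint] at hkey
  have hnT : ‖ContinuousLinearMap.adjoint T‖ = ‖T‖ :=
    LinearIsometryEquiv.norm_map ContinuousLinearMap.adjoint T
  rw [opNorm, hT, hkey, hnT, opNorm, sq]

lemma opNorm_smul {d n : ℕ} (c : ℝ) (A : Matrix (Fin d) (Fin n) ℝ) :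
    opNorm (c • A) = |c| * opNorm A := by
  rw [opNorm, _root_.map_smul, _root_.map_smul,
    norm_smul c (LinearMap.toContinuousLinearMap (Matrix.toEuclideanLin A)),
    Real.norm_eq_abs, opNorm]

lemma opNorm_continuous (d : ℕ) :
    Continuous (fun A : Matrix (Fin d) (Fin d) ℝ => opNorm A) := by
  have : Continuous (fun A : Matrix (Fin d) (Fin d) ℝ =>
      LinearMap.toContinuousLinearMap (Matrix.toEuclideanLin A)) := by
    exact LinearMap.continuous_of_finiteDimensional
      ((LinearMap.toContinuousLinearMap.toLinearMap).comp
        (Matrix.toEuclideanLin.toLinearMap :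
          Matrix (Fin d) (Fin d) ℝ →ₗ[ℝ] _))
  exact continuous_norm.comp this

lemma opNorm_pos {d : ℕ} {M : Matrix (Fin d) (Fin d) ℝ} (hM : M ≠ 0) : 0 < opNorm M := by
  rw [opNorm, norm_pos_iff]
  intro h
  apply hM
  have h0 : Matrix.toEuclideanLin M = 0 :=
    LinearMap.toContinuousLinearMap.injective (by simpa using h)
  exact Matrix.toEuclideanLin.injective (by simpa using h0)

/-- Consistency of the stable rank: if `z_1, z_2, …` are iid copies of a random
vector `z ∈ ℝ^d` with `0 < E‖z‖₂² < ∞`, and `Z_n = [z_1,…,z_n]`, then almost surely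
`st(Z_n) → er(M) = tr(M)/‖M‖_op` where `M = E[zzᵀ]`. -/
theorem stable_rank_consistency
    {Ω : Type*} [MeasurableSpace Ω] (P : Measure Ω) [IsProbabilityMeasure P]
    (d : ℕ) (hd : 0 < d)
    (z : ℕ → Ω → (Fin d → ℝ))
    (hmeas : ∀ i, Measurable (z i))
    (hindep : iIndepFun z P)
    (hident : ∀ i, Measure.map (z i) P = Measure.map (z 0) P)
    (hint : Integrable (fun ω => ∑ a, (z 0 ω a) ^ 2) P)
    (hpos : 0 < ∫ ω, ∑ a, (z 0 ω a) ^ 2 ∂P)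
    (M : Matrix (Fin d) (Fin d) ℝ)
    (hM : ∀ a b, M a b = ∫ ω, z 0 ω a * z 0 ω b ∂P)
    (Z : (n : ℕ) → Ω → Matrix (Fin d) (Fin n) ℝ)
    (hZ : ∀ n ω (a : Fin d) (t : Fin n), Z n ω a t = z (t : ℕ) ω a) :
    ∀ᵐ ω ∂P, Filter.Tendsto (fun n => stRank (Z n ω)) Filter.atTop
      (nhds (Matrix.trace M / opNorm M)) := by
  classical
  have idd : ∀ i, IdentDistrib (z i) (z 0) P P := fun i =>
    ⟨(hmeas i).aemeasurable, (hmeas 0).aemeasurable, hident i⟩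
  -- integrability of entry products
  have hintab : ∀ a b : Fin d, Integrable (fun ω => z 0 ω a * z 0 ω b) P := by
    intro a b
    refine hint.mono' ?_ ?_
    · exact (((measurable_pi_apply a).comp (hmeas 0)).mul
        ((measurable_pi_apply b).comp (hmeas 0))).aestronglyMeasurable
    · refine Filter.Eventually.of_forall fun ω => ?_
      have hx : (z 0 ω a) ^ 2 ≤ ∑ c, (z 0 ω c) ^ 2 :=
        Finset.single_le_sum (f := fun c => (z 0 ω c) ^ 2) (fun c _ => sq_nonneg _) (Finset.mem_univ a)
      have hy : (z 0 ω b) ^ 2 ≤ ∑ c, (z 0 ω c) ^ 2 :=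
        Finset.single_le_sum (f := fun c => (z 0 ω c) ^ 2) (fun c _ => sq_nonneg _) (Finset.mem_univ b)
      rw [Real.norm_eq_abs, abs_mul]
      nlinarith [sq_nonneg (|z 0 ω a| - |z 0 ω b|), sq_abs (z 0 ω a), sq_abs (z 0 ω b),
        abs_nonneg (z 0 ω a), abs_nonneg (z 0 ω b)]
  -- SLLN for entry products
  have hab : ∀ p : Fin d × Fin d, ∀ᵐ ω ∂P, Filter.Tendsto
      (fun n : ℕ => (n : ℝ)⁻¹ • ∑ i ∈ Finset.range n, z i ω p.1 * z i ω p.2)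
      Filter.atTop (nhds (M p.1 p.2)) := by
    rintro ⟨a, b⟩
    have hf : Measurable (fun v : Fin d → ℝ => v a * v b) :=
      (measurable_pi_apply a).mul (measurable_pi_apply b)
    have := strong_law_ae (μ := P) (fun i ω => z i ω a * z i ω b) (hintab a b)
      (fun i j hij => (hindep.indepFun hij).comp hf hf)
      (fun i => (idd i).comp hf)
    rw [show M a b = ∫ ω, z 0 ω a * z 0 ω b ∂P from hM a b]
    exact this
  -- SLLN for squared norms
  have hsq : ∀ᵐ ω ∂P, Filter.Tendsto
      (fun n : ℕ => (n : ℝ)⁻¹ • ∑ i ∈ Finset.range n, ∑ c, (z i ω c) ^ 2)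
      Filter.atTop (nhds (∫ ω, ∑ c, (z 0 ω c) ^ 2 ∂P)) := by
    have hf : Measurable (fun v : Fin d → ℝ => ∑ c, v c ^ 2) := by
      apply Finset.measurable_sum
      exact fun c _ => (measurable_pi_apply c).pow measurable_const
    exact strong_law_ae (μ := P) (fun i ω => ∑ c, (z i ω c) ^ 2) hint
      (fun i j hij => (hindep.indepFun hij).comp hf hf)
      (fun i => (idd i).comp hf)
  -- trace identity
  have htr : Matrix.trace M = ∫ ω, ∑ c, (z 0 ω c) ^ 2 ∂P := by
    have hi : ∀ c : Fin d, Integrable (fun ω => (z 0 ω c) ^ 2) P := by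
      intro c; simpa [sq] using hintab c c
    rw [integral_finset_sum Finset.univ (fun c _ => hi c)]
    unfold Matrix.trace
    refine Finset.sum_congr rfl fun c _ => ?_
    simp only [Matrix.diag_apply, hM c c, sq]
  -- M ≠ 0
  have hMne : M ≠ 0 := by
    intro h0
    rw [h0] at htr
    simp only [Matrix.trace_zero] at htr
    rw [← htr] at hpos
    exact lt_irrefl 0 hpos
  have hopM : 0 < opNorm M := opNorm_pos hMne
  filter_upwards [MeasureTheory.ae_all_iff.2 hab, hsq] with ω hω hωsq
  -- Gram matrix convergence
  have hGram : ∀ n : ℕ, ∀ a b : Fin d,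
      ((n : ℝ)⁻¹ • (Z n ω * (Z n ω)ᵀ)) a b
      = (n : ℝ)⁻¹ • ∑ i ∈ Finset.range n, z i ω a * z i ω b := by
    intro n a b
    simp only [Matrix.smul_apply, Matrix.mul_apply, Matrix.transpose_apply, smul_eq_mul]
    congr 1
    rw [← Fin.sum_univ_eq_sum_range (fun i => z i ω a * z i ω b) n]
    exact Finset.sum_congr rfl fun t _ => by rw [hZ, hZ]
  have hGtend : Filter.Tendsto (fun n : ℕ => (n : ℝ)⁻¹ • (Z n ω * (Z n ω)ᵀ))
      Filter.atTop (nhds M) := by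
    apply tendsto_pi_nhds.2
    intro a
    apply tendsto_pi_nhds.2
    intro b
    have := hω (a, b)
    simp only at this
    refine this.congr fun n => ?_
    exact (hGram n a b).symm
  have hOtend : Filter.Tendsto (fun n : ℕ => opNorm ((n : ℝ)⁻¹ • (Z n ω * (Z n ω)ᵀ)))
      Filter.atTop (nhds (opNorm M)) :=
    ((opNorm_continuous d).tendsto M).comp hGtend
  -- numerator
  have hFrob : ∀ n : ℕ, frobSq (Z n ω) = ∑ i ∈ Finset.range n, ∑ c, (z i ω c) ^ 2 := by
    intro n
    rw [frobSq, Finset.sum_comm, ← Fin.sum_univ_eq_sum_range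
      (fun i => ∑ c, (z i ω c) ^ 2) n]
    exact Finset.sum_congr rfl fun t _ => Finset.sum_congr rfl fun a _ => by rw [hZ]
  have hNtend : Filter.Tendsto (fun n : ℕ => (n : ℝ)⁻¹ • frobSq (Z n ω))
      Filter.atTop (nhds (Matrix.trace M)) := by
    rw [htr]
    refine hωsq.congr fun n => ?_
    rw [hFrob]
  have hdiv := hNtend.div hOtend (ne_of_gt hopM)
  refine Filter.Tendsto.congr' ?_ hdiv
  filter_upwards [Filter.eventually_ge_atTop 1] with n hn
  have hnpos : (0 : ℝ) < (n : ℝ)⁻¹ := by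
    have : (0 : ℝ) < (n : ℝ) := by exact_mod_cast hn
    positivity
  simp only [Pi.div_apply]
  rw [opNorm_smul, abs_of_pos hnpos, stRank, ← opNorm_mul_transpose (Z n ω)]
  simp only [smul_eq_mul]
  exact mul_div_mul_left _ _ (ne_of_gt hnpos)
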